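/- arXiv:2605.12392 — 3 statements merged into one kernel-verified Lean document; each statement's English description precedes it below -/
import Mathlib

section
/- Let m ≥ 3 and let R be an algebraic curvature tensor on ℝ^m, with Ricci tensor Ric_{ij} = Σ_k R_{kikj}, scalar curvature S = Σ_i Ric_{ii}, Schouten tensor A_{ij} = Ric_{ij} − S/(2(m−1))·δ_{ij}, and Weyl tensor W_{ijkl} = R_{ijkl} − (1/(m−2))·(A⊘δ)_{ijkl}. Then a symmetric 2-index array P on ℝ^m is Riemann compatible with R if and only if P is Weyl compatible with W and P commutes with the Ricci tensor, i.e. Σ_l P_{jl}·Ric_{li} = Σ_l P_{il}·Ric_{lj} for all i, j. -/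
/-- The Kronecker delta on `Fin m`, regarded as a real 2-index array. -/
def kdelta (m : ℕ) (i j : Fin m) : ℝ := if i = j then 1 else 0

/-- An algebraic curvature tensor on `ℝ^m`: a 4-index real array with the symmetries
`R_{ijkl} = −R_{jikl} = −R_{ijlk} = R_{klij}` and the first Bianchi identity. -/
def IsCurvatureTensor (m : ℕ) (R : Fin m → Fin m → Fin m → Fin m → ℝ) : Prop :=
  (∀ i j k l, R j i k l = - R i j k l) ∧
  (∀ i j k l, R i j l k = - R i j k l) ∧
  (∀ i j k l, R k l i j = R i j k l) ∧
  (∀ i j k l, R i j k l + R i k l j + R i l j k = 0)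

/-- A 2-index array `P` is compatible with a 4-index array `K` if
`Σ_l (K_{liks}P_{jl} + K_{lisj}P_{kl} + K_{lijk}P_{sl}) = 0` for all `i, j, k, s`. -/
def Compatible (m : ℕ) (K : Fin m → Fin m → Fin m → Fin m → ℝ)
    (P : Fin m → Fin m → ℝ) : Prop :=
  ∀ i j k s : Fin m,
    ∑ l, (K l i k s * P j l + K l i s j * P k l + K l i j k * P s l) = 0

/-- The Ricci tensor `Ric_{ij} = Σ_k R_{kikj}` of a 4-index array. -/
def ricci (m : ℕ) (R : Fin m → Fin m → Fin m → Fin m → ℝ) (i j : Fin m) : ℝ :=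
  ∑ k, R k i k j

/-- The scalar curvature `S = Σ_i Ric_{ii}`. -/
def scalarCurv (m : ℕ) (R : Fin m → Fin m → Fin m → Fin m → ℝ) : ℝ :=
  ∑ i, ricci m R i i

/-- The Schouten tensor `A_{ij} = Ric_{ij} − S/(2(m−1))·δ_{ij}`. -/
noncomputable def schouten (m : ℕ) (R : Fin m → Fin m → Fin m → Fin m → ℝ) (i j : Fin m) : ℝ :=
  ricci m R i j - scalarCurv m R / (2 * ((m : ℝ) - 1)) * kdelta m i j

/-- The Kulkarni–Nomizu product of two 2-index arrays. -/
def kn (m : ℕ) (P Q : Fin m → Fin m → ℝ) (i j k l : Fin m) : ℝ :=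
  P i k * Q j l + P j l * Q i k - P i l * Q j k - P j k * Q i l

/-- The Weyl tensor `W = R − (1/(m−2))·(A⊘δ)`. -/
noncomputable def weyl (m : ℕ) (R : Fin m → Fin m → Fin m → Fin m → ℝ) (i j k l : Fin m) : ℝ :=
  R i j k l - (1 / ((m : ℝ) - 2)) * kn m (schouten m R) (kdelta m) i j k l


lemma sum_kdelta_mul (m : ℕ) (f : Fin m → ℝ) (k : Fin m) :
    ∑ l, kdelta m l k * f l = f k := by simp [kdelta]

lemma kn_contract (m : ℕ) (A P : Fin m → Fin m → ℝ) (hP : ∀ i j, P i j = P j i)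
    (i j k s : Fin m) :
    ∑ l, (kn m A (kdelta m) l i k s * P j l + kn m A (kdelta m) l i s j * P k l
        + kn m A (kdelta m) l i j k * P s l)
      = kdelta m i s * (∑ l, (P j l * A l k - P k l * A l j))
      + kdelta m i k * (∑ l, (P s l * A l j - P j l * A l s))
      + kdelta m i j * (∑ l, (P k l * A l s - P s l * A l k)) := by
  have step : ∀ l : Fin m,
      kn m A (kdelta m) l i k s * P j l + kn m A (kdelta m) l i s j * P k l
        + kn m A (kdelta m) l i j k * P s l
      = kdelta m i s * (P j l * A l k - P k l * A l j)
        + kdelta m i k * (P s l * A l j - P j l * A l s)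
        + kdelta m i j * (P k l * A l s - P s l * A l k)
        + (A i s * (kdelta m l k * P j l - kdelta m l j * P k l)
          + A i k * (kdelta m l j * P s l - kdelta m l s * P j l)
          + A i j * (kdelta m l s * P k l - kdelta m l k * P s l)) := by
    intro l; simp only [kn]; ring
  rw [Finset.sum_congr rfl (fun l _ => step l)]
  rw [Finset.sum_add_distrib, Finset.sum_add_distrib, Finset.sum_add_distrib,
      ← Finset.mul_sum, ← Finset.mul_sum, ← Finset.mul_sum]
  have hz : ∑ l, (A i s * (kdelta m l k * P j l - kdelta m l j * P k l)
          + A i k * (kdelta m l j * P s l - kdelta m l s * P j l)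
          + A i j * (kdelta m l s * P k l - kdelta m l k * P s l)) = 0 := by
    rw [Finset.sum_add_distrib, Finset.sum_add_distrib,
        ← Finset.mul_sum, ← Finset.mul_sum, ← Finset.mul_sum]
    simp only [Finset.sum_sub_distrib, sum_kdelta_mul]
    rw [hP j k, hP s j, hP k s]; ring
  rw [hz]; ring

/-- The Schouten-commutator sums agree with the Ricci-commutator sums. -/
lemma schouten_comm_eq (m : ℕ) (R : Fin m → Fin m → Fin m → Fin m → ℝ)
    (P : Fin m → Fin m → ℝ) (hP : ∀ i j, P i j = P j i) (j k : Fin m) :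
    ∑ l, (P j l * schouten m R l k - P k l * schouten m R l j)
      = ∑ l, (P j l * ricci m R l k - P k l * ricci m R l j) := by
  have step : ∀ l : Fin m,
      P j l * schouten m R l k - P k l * schouten m R l j
      = (P j l * ricci m R l k - P k l * ricci m R l j)
        - scalarCurv m R / (2 * ((m : ℝ) - 1)) * (kdelta m l k * P j l - kdelta m l j * P k l) := by
    intro l; simp only [schouten]; ring
  rw [Finset.sum_congr rfl (fun l _ => step l)]
  rw [Finset.sum_sub_distrib, ← Finset.mul_sum]
  simp only [Finset.sum_sub_distrib, sum_kdelta_mul]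
  rw [hP j k]; ring

/-- Relation between Weyl-compatibility sums and Riemann-compatibility sums. -/
lemma weyl_sum_eq (m : ℕ) (R : Fin m → Fin m → Fin m → Fin m → ℝ)
    (P : Fin m → Fin m → ℝ) (hP : ∀ i j, P i j = P j i) (i j k s : Fin m) :
    ∑ l, (weyl m R l i k s * P j l + weyl m R l i s j * P k l + weyl m R l i j k * P s l)
      = (∑ l, (R l i k s * P j l + R l i s j * P k l + R l i j k * P s l))
        - (1 / ((m : ℝ) - 2)) *
          (kdelta m i s * (∑ l, (P j l * ricci m R l k - P k l * ricci m R l j))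
          + kdelta m i k * (∑ l, (P s l * ricci m R l j - P j l * ricci m R l s))
          + kdelta m i j * (∑ l, (P k l * ricci m R l s - P s l * ricci m R l k))) := by
  have step : ∀ l : Fin m,
      weyl m R l i k s * P j l + weyl m R l i s j * P k l + weyl m R l i j k * P s l
      = (R l i k s * P j l + R l i s j * P k l + R l i j k * P s l)
        - (1 / ((m : ℝ) - 2)) *
          (kn m (schouten m R) (kdelta m) l i k s * P j l
           + kn m (schouten m R) (kdelta m) l i s j * P k l
           + kn m (schouten m R) (kdelta m) l i j k * P s l) := by
    intro l; simp only [weyl]; ring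
  rw [Finset.sum_congr rfl (fun l _ => step l)]
  rw [Finset.sum_sub_distrib, ← Finset.mul_sum,
      kn_contract m (schouten m R) P hP i j k s,
      schouten_comm_eq m R P hP j k, schouten_comm_eq m R P hP s j,
      schouten_comm_eq m R P hP k s]

/-- If `P` is Riemann compatible, then `P` commutes with the Ricci tensor. -/
lemma commute_of_compatible (m : ℕ) (R : Fin m → Fin m → Fin m → Fin m → ℝ)
    (hR : IsCurvatureTensor m R) (P : Fin m → Fin m → ℝ) (hP : ∀ i j, P i j = P j i)
    (hC : Compatible m R P) (j k : Fin m) :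
    ∑ l, (P j l * ricci m R l k - P k l * ricci m R l j) = 0 := by
  obtain ⟨h1, h2, h3, h4⟩ := hR
  have anti : ∑ i, ∑ l, R l i j k * P i l = 0 := by
    have hswap : ∑ i, ∑ l, R l i j k * P i l = ∑ i, ∑ l, -(R l i j k * P i l) := by
      rw [Finset.sum_comm]
      refine Finset.sum_congr rfl (fun i _ => Finset.sum_congr rfl (fun l _ => ?_))
      rw [h1 l i j k, hP l i]; ring
    simp only [Finset.sum_neg_distrib] at hswap
    linarith
  have eA : ∑ i, ∑ l, R l i k i * P j l = ∑ l, P j l * ricci m R l k := by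
    rw [Finset.sum_comm]
    refine Finset.sum_congr rfl (fun l _ => ?_)
    have e : ∀ i : Fin m, R l i k i * P j l = P j l * R i l i k := by
      intro i
      have hx : R l i k i = R i l i k := by
        have a := h2 l i k i; have b := h1 i l i k; linarith
      rw [hx]; ring
    rw [Finset.sum_congr rfl (fun i _ => e i), ← Finset.mul_sum, ricci]
  have eB : ∑ i, ∑ l, R l i i j * P k l = -∑ l, P k l * ricci m R l j := by
    rw [Finset.sum_comm]
    rw [← Finset.sum_neg_distrib]
    refine Finset.sum_congr rfl (fun l _ => ?_)
    have e : ∀ i : Fin m, R l i i j * P k l = -(P k l * R i l i j) := by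
      intro i; rw [h1 i l i j]; ring
    rw [Finset.sum_congr rfl (fun i _ => e i), Finset.sum_neg_distrib, ← Finset.mul_sum, ricci]
  have htot : ∑ i, ∑ l, (R l i k i * P j l + R l i i j * P k l + R l i j k * P i l) = 0 :=
    Finset.sum_eq_zero (fun i _ => hC i j k i)
  simp only [Finset.sum_add_distrib] at htot
  rw [eA, eB, anti] at htot
  rw [Finset.sum_sub_distrib]
  linarith


/-- A symmetric 2-index array `P` is Riemann compatible with `R` if and only if it is
Weyl compatible with the Weyl tensor of `R` and commutes with the Ricci tensor of `R`. -/
theorem riemann_compatible_iff_weyl_compatible_and_commutes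
    (m : ℕ) (hm : 3 ≤ m) (R : Fin m → Fin m → Fin m → Fin m → ℝ)
    (hR : IsCurvatureTensor m R)
    (P : Fin m → Fin m → ℝ) (hP : ∀ i j, P i j = P j i) :
    Compatible m R P ↔
      (Compatible m (weyl m R) P ∧
        ∀ i j, (∑ l, P j l * ricci m R l i) = ∑ l, P i l * ricci m R l j) := by
  constructor
  · intro hC
    have hB : ∀ j k, ∑ l, (P j l * ricci m R l k - P k l * ricci m R l j) = 0 :=
      commute_of_compatible m R hR P hP hC
    constructor
    · intro i j k s
      rw [weyl_sum_eq m R P hP i j k s, hC i j k s, hB j k, hB s j, hB k s]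
      ring
    · intro i j
      have := hB j i
      rw [Finset.sum_sub_distrib] at this
      linarith
  · rintro ⟨hW, hcomm⟩ i j k s
    have hB : ∀ j k, ∑ l, (P j l * ricci m R l k - P k l * ricci m R l j) = 0 := by
      intro a b
      rw [Finset.sum_sub_distrib, hcomm b a]
      ring
    have := weyl_sum_eq m R P hP i j k s
    rw [hW i j k s, hB j k, hB s j, hB k s] at this
    linarith [this]
end

section
/- Let m ≥ 4 and let W be an algebraic Weyl tensor on ℝ^m. For a symmetric, trace-free 2-index array P, define (W*P)_{i₂…i_{m−2} j} = Σ_{l,k} W*_{l i₂…i_{m−2} k j} P_{lk}, where W*_{i₁…i_{m−2} j k} = Σ_{p,q} ε_{i₁…i_{m−2} p q} W_{pqjk}. Then W*P = 0 (all components vanish) if and only if P is Weyl compatible with W, i.e. Σ_l (W_{liks}P_{jl} + W_{lisj}P_{kl} + W_{lijk}P_{sl}) = 0 for all i, j, k, s. -/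
/-- An algebraic Weyl tensor on `ℝ^m`: a 4-index real array with the symmetries
`W_{ijkl} = −W_{jikl} = −W_{ijlk} = W_{klij}`, the first Bianchi identity, and which is
totally trace-free. -/
def IsWeylTensor (m : ℕ) (W : Fin m → Fin m → Fin m → Fin m → ℝ) : Prop :=
  (∀ i j k l, W j i k l = - W i j k l) ∧
  (∀ i j k l, W i j l k = - W i j k l) ∧
  (∀ i j k l, W k l i j = W i j k l) ∧
  (∀ i j k l, W i j k l + W i k l j + W i l j k = 0) ∧
  (∀ i j, ∑ k, W k i k j = 0)

/-- The Levi-Civita symbol on `Fin m`: the sign of the tuple regarded as a permutation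
when all its entries are distinct, and `0` otherwise. -/
noncomputable def leviCivita (m : ℕ) (σ : Fin m → Fin m) : ℝ :=
  if h : Function.Bijective σ then
    ((Equiv.Perm.sign (Equiv.ofBijective σ h) : ℤ) : ℝ)
  else 0

/-- The `m`-tuple `(i₁, …, i_{m−2}, p, q)` built from an `(m−2)`-tuple `I` and two
further indices `p`, `q`. -/
def extendTuple (m : ℕ) (I : Fin (m - 2) → Fin m) (p q : Fin m) (t : Fin m) : Fin m :=
  if ht : (t : ℕ) < m - 2 then I ⟨t, ht⟩ else if (t : ℕ) = m - 2 then p else q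

/-- The array `W*_{i₁…i_{m−2} j k} = Σ_{p,q} ε_{i₁…i_{m−2} p q} W_{pqjk}`. -/
noncomputable def wstar (m : ℕ) (W : Fin m → Fin m → Fin m → Fin m → ℝ)
    (I : Fin (m - 2) → Fin m) (j k : Fin m) : ℝ :=
  ∑ p, ∑ q, leviCivita m (extendTuple m I p q) * W p q j k

/-- The `(m−2)`-tuple `(l, i₂, …, i_{m−2})` built from an index `l` and an
`(m−3)`-tuple `J`. -/
def consTuple (m : ℕ) (l : Fin m) (J : Fin (m - 3) → Fin m) (t : Fin (m - 2)) : Fin m :=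
  if ht : (t : ℕ) = 0 then l
  else J ⟨(t : ℕ) - 1, by have h := t.isLt; omega⟩

/-- The array `(W*P)_{i₂…i_{m−2} j} = Σ_{l,k} W*_{l i₂…i_{m−2} k j} P_{lk}`. -/
noncomputable def wstarAction (m : ℕ) (W : Fin m → Fin m → Fin m → Fin m → ℝ)
    (P : Fin m → Fin m → ℝ) (J : Fin (m - 3) → Fin m) (j : Fin m) : ℝ :=
  ∑ l, ∑ k, wstar m W (consTuple m l J) k j * P l k


lemma leviCivita_comp (m : ℕ) (σ : Fin m → Fin m) (e : Equiv.Perm (Fin m)) :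
    leviCivita m (σ ∘ ⇑e) = ((Equiv.Perm.sign e : ℤ) : ℝ) * leviCivita m σ := by
  by_cases h : Function.Bijective σ
  · have h2 : Function.Bijective (σ ∘ ⇑e) := h.comp e.bijective
    rw [leviCivita, leviCivita, dif_pos h2, dif_pos h]
    have he : Equiv.ofBijective (σ ∘ ⇑e) h2 = e.trans (Equiv.ofBijective σ h) :=
      Equiv.coe_fn_injective rfl
    have ht : e.trans (Equiv.ofBijective σ h) = (Equiv.ofBijective σ h) * e := rfl
    rw [he, ht, map_mul]
    push_cast
    ring
  · have h2 : ¬ Function.Bijective (σ ∘ ⇑e) := by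
      intro hc
      have hs : σ = (σ ∘ ⇑e) ∘ ⇑e.symm := by funext x; simp
      exact h (hs ▸ hc.comp e.symm.bijective)
    rw [leviCivita, leviCivita, dif_neg h2, dif_neg h]; ring

lemma leviCivita_eq_zero_of_eq (m : ℕ) (σ : Fin m → Fin m) {x y : Fin m}
    (hxy : x ≠ y) (hv : σ x = σ y) : leviCivita m σ = 0 := by
  rw [leviCivita, dif_neg]
  exact fun h => hxy (h.injective hv)

lemma leviCivita_perm (m : ℕ) (σ : Equiv.Perm (Fin m)) :
    leviCivita m ⇑σ = ((Equiv.Perm.sign σ : ℤ) : ℝ) := by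
  rw [leviCivita, dif_pos σ.bijective]
  congr 1
  exact congrArg _ (congrArg _ (Equiv.coe_fn_injective rfl))

lemma leviCivita_perm_ne_zero (m : ℕ) (σ : Equiv.Perm (Fin m)) :
    leviCivita m ⇑σ ≠ 0 := by
  rw [leviCivita_perm]
  rcases Int.units_eq_one_or (Equiv.Perm.sign σ) with h | h <;> rw [h] <;> norm_num

section TTlemmas
variable {m : ℕ} (hm : 4 ≤ m) (J : Fin (m - 3) → Fin m) (l p q : Fin m)
include hm

lemma TT_apply0 (t : Fin m) (h : (t : ℕ) = 0) :
    extendTuple m (consTuple m l J) p q t = l := by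
  rw [extendTuple, dif_pos (by omega : (t : ℕ) < m - 2), consTuple, dif_pos h]

lemma TT_apply2 (t : Fin m) (h : (t : ℕ) = m - 2) :
    extendTuple m (consTuple m l J) p q t = p := by
  rw [extendTuple, dif_neg (by omega : ¬ (t : ℕ) < m - 2), if_pos h]

lemma TT_apply1 (t : Fin m) (h : (t : ℕ) = m - 1) :
    extendTuple m (consTuple m l J) p q t = q := by
  rw [extendTuple, dif_neg (by omega : ¬ (t : ℕ) < m - 2),
    if_neg (by omega : ¬ (t : ℕ) = m - 2)]

lemma TT_apply_mid (t : Fin m) (h0 : (t : ℕ) ≠ 0) (h2 : (t : ℕ) ≠ m - 2)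
    (h1 : (t : ℕ) ≠ m - 1) :
    extendTuple m (consTuple m l J) p q t
      = J ⟨(t : ℕ) - 1, by have := t.isLt; omega⟩ := by
  have hlt : (t : ℕ) < m - 2 := by have := t.isLt; omega
  rw [extendTuple, dif_pos hlt, consTuple, dif_neg h0]

end TTlemmas


section Swaps
variable {m : ℕ} (hm : 4 ≤ m) (J : Fin (m - 3) → Fin m) (l p q : Fin m)
include hm

lemma TT_comp_swap_pq :
    extendTuple m (consTuple m l J) p q ∘
      ⇑(Equiv.swap (⟨m - 2, by omega⟩ : Fin m) ⟨m - 1, by omega⟩)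
      = extendTuple m (consTuple m l J) q p := by
  funext t
  simp only [Function.comp_apply]
  by_cases h2 : t = (⟨m - 2, by omega⟩ : Fin m)
  · subst h2
    rw [Equiv.swap_apply_left, TT_apply1 hm J l p q _ rfl, TT_apply2 hm J l q p _ rfl]
  · by_cases h1 : t = (⟨m - 1, by omega⟩ : Fin m)
    · subst h1
      rw [Equiv.swap_apply_right, TT_apply2 hm J l p q _ rfl, TT_apply1 hm J l q p _ rfl]
    · rw [Equiv.swap_apply_of_ne_of_ne h2 h1]
      have h2' : (t : ℕ) ≠ m - 2 := fun hc => h2 (Fin.ext hc)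
      have h1' : (t : ℕ) ≠ m - 1 := fun hc => h1 (Fin.ext hc)
      by_cases h0 : (t : ℕ) = 0
      · rw [TT_apply0 hm J l p q t h0, TT_apply0 hm J l q p t h0]
      · rw [TT_apply_mid hm J l p q t h0 h2' h1', TT_apply_mid hm J l q p t h0 h2' h1']

lemma TT_comp_swap_lp :
    extendTuple m (consTuple m l J) p q ∘
      ⇑(Equiv.swap (⟨0, by omega⟩ : Fin m) ⟨m - 2, by omega⟩)
      = extendTuple m (consTuple m p J) l q := by
  funext t
  simp only [Function.comp_apply]
  by_cases h0 : t = (⟨0, by omega⟩ : Fin m)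
  · subst h0
    rw [Equiv.swap_apply_left, TT_apply2 hm J l p q _ rfl, TT_apply0 hm J p l q _ rfl]
  · by_cases h2 : t = (⟨m - 2, by omega⟩ : Fin m)
    · subst h2
      rw [Equiv.swap_apply_right, TT_apply0 hm J l p q _ rfl, TT_apply2 hm J p l q _ rfl]
    · rw [Equiv.swap_apply_of_ne_of_ne h0 h2]
      have h0' : (t : ℕ) ≠ 0 := fun hc => h0 (Fin.ext hc)
      have h2' : (t : ℕ) ≠ m - 2 := fun hc => h2 (Fin.ext hc)
      by_cases h1 : (t : ℕ) = m - 1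
      · rw [TT_apply1 hm J l p q t h1, TT_apply1 hm J p l q t h1]
      · rw [TT_apply_mid hm J l p q t h0' h2' h1, TT_apply_mid hm J p l q t h0' h2' h1]

lemma lc_TT_pq :
    leviCivita m (extendTuple m (consTuple m l J) q p)
      = - leviCivita m (extendTuple m (consTuple m l J) p q) := by
  rw [← TT_comp_swap_pq hm J l p q, leviCivita_comp,
    Equiv.Perm.sign_swap (by simp [Fin.ext_iff]; omega :
      (⟨m - 2, by omega⟩ : Fin m) ≠ ⟨m - 1, by omega⟩)]
  push_cast
  ring

lemma lc_TT_lp :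
    leviCivita m (extendTuple m (consTuple m p J) l q)
      = - leviCivita m (extendTuple m (consTuple m l J) p q) := by
  rw [← TT_comp_swap_lp hm J l p q, leviCivita_comp,
    Equiv.Perm.sign_swap (by simp [Fin.ext_iff]; omega :
      (⟨0, by omega⟩ : Fin m) ≠ ⟨m - 2, by omega⟩)]
  push_cast
  ring

lemma lc_TT_cyc :
    leviCivita m (extendTuple m (consTuple m p J) q l)
      = leviCivita m (extendTuple m (consTuple m l J) p q) := by
  rw [lc_TT_pq hm J p l q, lc_TT_lp hm J l p q, neg_neg]

end Swaps


lemma sum_three {m : ℕ} (f : Fin m → ℝ) (a b c : Fin m) (hab : a ≠ b) (hac : a ≠ c)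
    (hbc : b ≠ c) (hf : ∀ x, x ≠ a → x ≠ b → x ≠ c → f x = 0) :
    ∑ x, f x = f a + f b + f c := by
  have h1 : ∑ x ∈ ({a, b, c} : Finset (Fin m)), f x = ∑ x, f x :=
    Finset.sum_subset (Finset.subset_univ _) (fun x _ hx => by
      simp only [Finset.mem_insert, Finset.mem_singleton] at hx
      push_neg at hx
      exact hf x hx.1 hx.2.1 hx.2.2)
  rw [← h1, show ({a, b, c} : Finset (Fin m)) = insert a (insert b {c}) from rfl,
    Finset.sum_insert (by simp [hab, hac]), Finset.sum_insert (by simp [hbc]),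
    Finset.sum_singleton]
  ring

lemma wstarAction_eq (m : ℕ) (W : Fin m → Fin m → Fin m → Fin m → ℝ)
    (P : Fin m → Fin m → ℝ) (J : Fin (m - 3) → Fin m) (j : Fin m) :
    wstarAction m W P J j =
      ∑ l, ∑ p, ∑ q, leviCivita m (extendTuple m (consTuple m l J) p q) *
        ∑ k, W p q k j * P l k := by
  unfold wstarAction wstar
  refine Finset.sum_congr rfl fun l _ => ?_
  simp only [Finset.sum_mul, Finset.mul_sum, mul_assoc]
  rw [Finset.sum_comm]
  exact Finset.sum_congr rfl fun p _ => Finset.sum_comm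

section Reps
variable {m : ℕ} (hm : 4 ≤ m) (J : Fin (m - 3) → Fin m)
include hm

lemma lc_TT_rep_lp (l q : Fin m) :
    leviCivita m (extendTuple m (consTuple m l J) l q) = 0 := by
  refine leviCivita_eq_zero_of_eq m _
    (show (⟨0, by omega⟩ : Fin m) ≠ ⟨m - 2, by omega⟩ by simp [Fin.ext_iff]; omega) ?_
  rw [TT_apply0 hm J l l q _ rfl, TT_apply2 hm J l l q _ rfl]

lemma lc_TT_rep_lq (l p : Fin m) :
    leviCivita m (extendTuple m (consTuple m l J) p l) = 0 := by
  refine leviCivita_eq_zero_of_eq m _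
    (show (⟨0, by omega⟩ : Fin m) ≠ ⟨m - 1, by omega⟩ by simp [Fin.ext_iff]; omega) ?_
  rw [TT_apply0 hm J l p l _ rfl, TT_apply1 hm J l p l _ rfl]

lemma lc_TT_rep_pq (l p : Fin m) :
    leviCivita m (extendTuple m (consTuple m l J) p p) = 0 := by
  refine leviCivita_eq_zero_of_eq m _
    (show (⟨m - 2, by omega⟩ : Fin m) ≠ ⟨m - 1, by omega⟩ by simp [Fin.ext_iff]; omega) ?_
  rw [TT_apply2 hm J l p p _ rfl, TT_apply1 hm J l p p _ rfl]

end Reps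


lemma backward_dir (m : ℕ) (hm : 4 ≤ m) (W : Fin m → Fin m → Fin m → Fin m → ℝ)
    (hPair : ∀ i j k l, W k l i j = W i j k l)
    (P : Fin m → Fin m → ℝ) (hC : Compatible m W P)
    (J : Fin (m - 3) → Fin m) (j : Fin m) : wstarAction m W P J j = 0 := by
  rw [wstarAction_eq]
  set F : Fin m → Fin m → Fin m → ℝ := fun l p q =>
    leviCivita m (extendTuple m (consTuple m l J) p q) * ∑ k, W p q k j * P l k with hF
  show ∑ l, ∑ p, ∑ q, F l p q = 0
  have e1 : ∑ l, ∑ p, ∑ q, F p q l = ∑ l, ∑ p, ∑ q, F l p q := by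
    rw [Finset.sum_comm]
    exact Finset.sum_congr rfl fun _ _ => Finset.sum_comm
  have e2 : ∑ l, ∑ p, ∑ q, F q l p = ∑ l, ∑ p, ∑ q, F l p q := by
    rw [show (∑ l, ∑ p, ∑ q, F q l p) = ∑ l, ∑ q, ∑ p, F q l p from
      Finset.sum_congr rfl fun _ _ => Finset.sum_comm, Finset.sum_comm]
  have hzero : ∑ l, ∑ p, ∑ q, (F l p q + F p q l + F q l p) = 0 := by
    refine Finset.sum_eq_zero fun l _ => Finset.sum_eq_zero fun p _ =>
      Finset.sum_eq_zero fun q _ => ?_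
    rw [hF]
    simp only
    rw [lc_TT_cyc hm J p q l, lc_TT_cyc hm J l p q]
    · rw [← mul_add, ← mul_add]
      have hA : ((∑ k, W p q k j * P l k) + ∑ k, W q l k j * P p k)
          + ∑ k, W l p k j * P q k = 0 := by
        rw [← Finset.sum_add_distrib, ← Finset.sum_add_distrib, ← hC j l p q]
        refine Finset.sum_congr rfl fun t _ => ?_
        rw [hPair t j p q, hPair t j q l, hPair t j l p]
      rw [hA, mul_zero]
  have h3 : (3 : ℝ) * (∑ l, ∑ p, ∑ q, F l p q) = 0 := by
    calc (3 : ℝ) * (∑ l, ∑ p, ∑ q, F l p q)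
        = (∑ l, ∑ p, ∑ q, F l p q) + (∑ l, ∑ p, ∑ q, F p q l)
          + (∑ l, ∑ p, ∑ q, F q l p) := by rw [e1, e2]; ring
      _ = ∑ l, ∑ p, ∑ q, (F l p q + F p q l + F q l p) := by
          simp only [← Finset.sum_add_distrib]
      _ = 0 := hzero
  linarith


lemma forward_dir (m : ℕ) (hm : 4 ≤ m) (W : Fin m → Fin m → Fin m → Fin m → ℝ)
    (hA1 : ∀ i j k l, W j i k l = - W i j k l)
    (hA2 : ∀ i j k l, W i j l k = - W i j k l)
    (hPair : ∀ i j k l, W k l i j = W i j k l)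
    (P : Fin m → Fin m → ℝ)
    (h : ∀ (J : Fin (m - 3) → Fin m) (j : Fin m), wstarAction m W P J j = 0) :
    Compatible m W P := by
  intro i j k s
  by_cases hks : k = s
  · subst hks
    refine Finset.sum_eq_zero fun l _ => ?_
    have h1 := hA2 l i k k
    have hz : W l i k k = 0 := by linarith
    rw [hz, hA2 l i j k]; ring
  by_cases hjk : j = k
  · subst hjk
    refine Finset.sum_eq_zero fun l _ => ?_
    have hz : W l i j j = 0 := by have := hA2 l i j j; linarith
    rw [hz, hA2 l i j s]; ring
  by_cases hjs : j = s
  · subst hjs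
    refine Finset.sum_eq_zero fun l _ => ?_
    have hz : W l i j j = 0 := by have := hA2 l i j j; linarith
    rw [hz, hA2 l i j k]; ring
  -- main case: j, k, s pairwise distinct
  have hzza : (⟨0, by omega⟩ : Fin m) ≠ ⟨m - 2, by omega⟩ := by
    simp only [ne_eq, Fin.mk.injEq]; omega
  have hzzb : (⟨0, by omega⟩ : Fin m) ≠ ⟨m - 1, by omega⟩ := by
    simp only [ne_eq, Fin.mk.injEq]; omega
  have hzazb : (⟨m - 2, by omega⟩ : Fin m) ≠ ⟨m - 1, by omega⟩ := by
    simp only [ne_eq, Fin.mk.injEq]; omega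
  obtain ⟨σ, hσz, hσa, hσb⟩ : ∃ σ : Equiv.Perm (Fin m),
      σ ⟨0, by omega⟩ = j ∧ σ ⟨m - 2, by omega⟩ = k ∧ σ ⟨m - 1, by omega⟩ = s := by
    set σ1 := Equiv.swap (⟨0, by omega⟩ : Fin m) j with hσ1
    have h1 : σ1 ⟨0, by omega⟩ = j := Equiv.swap_apply_left _ _
    set k1 := σ1.symm k with hk1
    have hk1z : k1 ≠ ⟨0, by omega⟩ := by
      intro hc
      apply hjk
      have hkk : σ1 k1 = k := σ1.apply_symm_apply k
      rw [hc, h1] at hkk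
      exact hkk
    set σ2 := σ1 * Equiv.swap (⟨m - 2, by omega⟩ : Fin m) k1 with hσ2
    have h2z : σ2 ⟨0, by omega⟩ = j := by
      show σ1 (Equiv.swap _ k1 ⟨0, by omega⟩) = j
      rw [Equiv.swap_apply_of_ne_of_ne hzza (Ne.symm hk1z)]
      exact h1
    have h2a : σ2 ⟨m - 2, by omega⟩ = k := by
      show σ1 (Equiv.swap _ k1 ⟨m - 2, by omega⟩) = k
      rw [Equiv.swap_apply_left]
      exact σ1.apply_symm_apply k
    set s1 := σ2.symm s with hs1
    have hs1z : s1 ≠ ⟨0, by omega⟩ := by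
      intro hc
      apply hjs
      rw [← h2z, ← hc, Equiv.apply_symm_apply]
    have hs1a : s1 ≠ ⟨m - 2, by omega⟩ := by
      intro hc
      apply hks
      rw [← h2a, ← hc, Equiv.apply_symm_apply]
    refine ⟨σ2 * Equiv.swap (⟨m - 1, by omega⟩ : Fin m) s1, ?_, ?_, ?_⟩
    · show σ2 (Equiv.swap _ s1 ⟨0, by omega⟩) = j
      rw [Equiv.swap_apply_of_ne_of_ne hzzb (Ne.symm hs1z)]
      exact h2z
    · show σ2 (Equiv.swap _ s1 ⟨m - 2, by omega⟩) = k
      rw [Equiv.swap_apply_of_ne_of_ne hzazb (Ne.symm hs1a)]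
      exact h2a
    · show σ2 (Equiv.swap _ s1 ⟨m - 1, by omega⟩) = s
      rw [Equiv.swap_apply_left]
      exact Equiv.apply_symm_apply _ _
  set J : Fin (m - 3) → Fin m :=
    fun u => σ ⟨(u : ℕ) + 1, by have := u.isLt; omega⟩ with hJdef
  have hmid : ∀ (l p q : Fin m) (x : Fin m), (x : ℕ) ≠ 0 → (x : ℕ) ≠ m - 2 →
      (x : ℕ) ≠ m - 1 → extendTuple m (consTuple m l J) p q x = σ x := by
    intro l p q x h0 h2 h1
    rw [TT_apply_mid hm J l p q x h0 h2 h1]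
    show σ _ = σ x
    congr 1
    refine Fin.ext ?_
    show (x : ℕ) - 1 + 1 = (x : ℕ)
    omega
  have hTTσ : extendTuple m (consTuple m j J) k s = ⇑σ := by
    funext x
    by_cases h0 : (x : ℕ) = 0
    · rw [TT_apply0 hm J j k s x h0, show x = (⟨0, by omega⟩ : Fin m) from Fin.ext h0, hσz]
    by_cases h2 : (x : ℕ) = m - 2
    · rw [TT_apply2 hm J j k s x h2,
        show x = (⟨m - 2, by omega⟩ : Fin m) from Fin.ext h2, hσa]
    by_cases h1 : (x : ℕ) = m - 1
    · rw [TT_apply1 hm J j k s x h1,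
        show x = (⟨m - 1, by omega⟩ : Fin m) from Fin.ext h1, hσb]
    · exact hmid j k s x h0 h2 h1
  have he0ne : leviCivita m (extendTuple m (consTuple m j J) k s) ≠ 0 := by
    rw [hTTσ]; exact leviCivita_perm_ne_zero m σ
  have hvl : ∀ l p q : Fin m, l ≠ j → l ≠ k → l ≠ s →
      leviCivita m (extendTuple m (consTuple m l J) p q) = 0 := by
    intro l p q h1 h2 h3
    have hxv : σ (σ.symm l) = l := σ.apply_symm_apply l
    have hx0 : ((σ.symm l : Fin m) : ℕ) ≠ 0 := by
      intro hc
      exact h1 (by rw [← hxv, show σ.symm l = (⟨0, by omega⟩ : Fin m) from Fin.ext hc, hσz])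
    have hx2 : ((σ.symm l : Fin m) : ℕ) ≠ m - 2 := by
      intro hc
      exact h2 (by
        rw [← hxv, show σ.symm l = (⟨m - 2, by omega⟩ : Fin m) from Fin.ext hc, hσa])
    have hx1 : ((σ.symm l : Fin m) : ℕ) ≠ m - 1 := by
      intro hc
      exact h3 (by
        rw [← hxv, show σ.symm l = (⟨m - 1, by omega⟩ : Fin m) from Fin.ext hc, hσb])
    refine leviCivita_eq_zero_of_eq m _
      (show (⟨0, by omega⟩ : Fin m) ≠ σ.symm l from
        fun hc => hx0 (congrArg Fin.val hc).symm) ?_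
    rw [TT_apply0 hm J l p q _ rfl, hmid l p q _ hx0 hx2 hx1, hxv]
  have hvp : ∀ l p q : Fin m, p ≠ j → p ≠ k → p ≠ s →
      leviCivita m (extendTuple m (consTuple m l J) p q) = 0 := by
    intro l p q h1 h2 h3
    have hxv : σ (σ.symm p) = p := σ.apply_symm_apply p
    have hx0 : ((σ.symm p : Fin m) : ℕ) ≠ 0 := by
      intro hc
      exact h1 (by rw [← hxv, show σ.symm p = (⟨0, by omega⟩ : Fin m) from Fin.ext hc, hσz])
    have hx2 : ((σ.symm p : Fin m) : ℕ) ≠ m - 2 := by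
      intro hc
      exact h2 (by
        rw [← hxv, show σ.symm p = (⟨m - 2, by omega⟩ : Fin m) from Fin.ext hc, hσa])
    have hx1 : ((σ.symm p : Fin m) : ℕ) ≠ m - 1 := by
      intro hc
      exact h3 (by
        rw [← hxv, show σ.symm p = (⟨m - 1, by omega⟩ : Fin m) from Fin.ext hc, hσb])
    refine leviCivita_eq_zero_of_eq m _
      (show (⟨m - 2, by omega⟩ : Fin m) ≠ σ.symm p from
        fun hc => hx2 (congrArg Fin.val hc).symm) ?_
    rw [TT_apply2 hm J l p q _ rfl, hmid l p q _ hx0 hx2 hx1, hxv]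
  have hvq : ∀ l p q : Fin m, q ≠ j → q ≠ k → q ≠ s →
      leviCivita m (extendTuple m (consTuple m l J) p q) = 0 := by
    intro l p q h1 h2 h3
    have hxv : σ (σ.symm q) = q := σ.apply_symm_apply q
    have hx0 : ((σ.symm q : Fin m) : ℕ) ≠ 0 := by
      intro hc
      exact h1 (by rw [← hxv, show σ.symm q = (⟨0, by omega⟩ : Fin m) from Fin.ext hc, hσz])
    have hx2 : ((σ.symm q : Fin m) : ℕ) ≠ m - 2 := by
      intro hc
      exact h2 (by
        rw [← hxv, show σ.symm q = (⟨m - 2, by omega⟩ : Fin m) from Fin.ext hc, hσa])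
    have hx1 : ((σ.symm q : Fin m) : ℕ) ≠ m - 1 := by
      intro hc
      exact h3 (by
        rw [← hxv, show σ.symm q = (⟨m - 1, by omega⟩ : Fin m) from Fin.ext hc, hσb])
    refine leviCivita_eq_zero_of_eq m _
      (show (⟨m - 1, by omega⟩ : Fin m) ≠ σ.symm q from
        fun hc => hx1 (congrArg Fin.val hc).symm) ?_
    rw [TT_apply1 hm J l p q _ rfl, hmid l p q _ hx0 hx2 hx1, hxv]
  have hw := h J i
  rw [wstarAction_eq] at hw
  have houtl : ∀ x : Fin m, x ≠ j → x ≠ k → x ≠ s →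
      (∑ p, ∑ q, leviCivita m (extendTuple m (consTuple m x J) p q) *
        ∑ t, W p q t i * P x t) = 0 := fun x h1 h2 h3 =>
    Finset.sum_eq_zero fun p _ => Finset.sum_eq_zero fun q _ => by
      rw [hvl x p q h1 h2 h3, zero_mul]
  have houtp : ∀ l : Fin m, ∀ x : Fin m, x ≠ j → x ≠ k → x ≠ s →
      (∑ q, leviCivita m (extendTuple m (consTuple m l J) x q) *
        ∑ t, W x q t i * P l t) = 0 := fun l x h1 h2 h3 =>
    Finset.sum_eq_zero fun q _ => by rw [hvp l x q h1 h2 h3, zero_mul]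
  have houtq : ∀ l p : Fin m, ∀ x : Fin m, x ≠ j → x ≠ k → x ≠ s →
      (leviCivita m (extendTuple m (consTuple m l J) p x) *
        ∑ t, W p x t i * P l t) = 0 := fun l p x h1 h2 h3 => by
    rw [hvq l p x h1 h2 h3, zero_mul]
  rw [sum_three _ j k s hjk hjs hks houtl] at hw
  rw [sum_three _ j k s hjk hjs hks (houtp j), sum_three _ j k s hjk hjs hks (houtp k),
    sum_three _ j k s hjk hjs hks (houtp s)] at hw
  rw [sum_three _ j k s hjk hjs hks (houtq j j), sum_three _ j k s hjk hjs hks (houtq j k),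
    sum_three _ j k s hjk hjs hks (houtq j s), sum_three _ j k s hjk hjs hks (houtq k j),
    sum_three _ j k s hjk hjs hks (houtq k k), sum_three _ j k s hjk hjs hks (houtq k s),
    sum_three _ j k s hjk hjs hks (houtq s j), sum_three _ j k s hjk hjs hks (houtq s k),
    sum_three _ j k s hjk hjs hks (houtq s s)] at hw
  simp only [lc_TT_rep_lp hm J, lc_TT_rep_lq hm J, lc_TT_rep_pq hm J, zero_mul,
    add_zero, zero_add] at hw
  have hl4 : leviCivita m (extendTuple m (consTuple m s J) j k)
      = leviCivita m (extendTuple m (consTuple m j J) k s) :=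
    (lc_TT_cyc hm J k s j).trans (lc_TT_cyc hm J j k s)
  rw [lc_TT_pq hm J j k s, lc_TT_cyc hm J j k s, lc_TT_lp hm J j k s,
    lc_TT_pq hm J s j k, hl4] at hw
  have key : leviCivita m (extendTuple m (consTuple m j J) k s) *
      ((2 : ℝ) * ∑ t, (W t i k s * P j t + W t i s j * P k t + W t i j k * P s t)) = 0 := by
    rw [← hw]
    simp only [Finset.mul_sum, neg_mul, ← Finset.sum_neg_distrib, ← Finset.sum_add_distrib]
    refine Finset.sum_congr rfl fun t _ => ?_
    rw [hA1 k s t i, hA1 s j t i, hA1 j k t i, hPair t i k s, hPair t i s j, hPair t i j k]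
    ring
  rcases mul_eq_zero.mp key with h' | h'
  · exact absurd h' he0ne
  · linarith


/-- For a symmetric trace-free `P`, `W*P = 0` if and only if `P` is Weyl compatible. -/
theorem wstarAction_eq_zero_iff_weyl_compatible
    (m : ℕ) (hm : 4 ≤ m) (W : Fin m → Fin m → Fin m → Fin m → ℝ)
    (hW : IsWeylTensor m W)
    (P : Fin m → Fin m → ℝ) (hPsymm : ∀ i j, P i j = P j i)
    (hPtr : (∑ i, P i i) = 0) :
    (∀ (J : Fin (m - 3) → Fin m) (j : Fin m), wstarAction m W P J j = 0) ↔
      Compatible m W P := by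
  obtain ⟨hA1, hA2, hPair, _, _⟩ := hW
  exact ⟨fun h => forward_dir m hm W hA1 hA2 hPair P h,
    fun hC J j => backward_dir m hm W hPair P hC J j⟩
end

section
/- Let m ≥ 4 and let W be an algebraic Weyl tensor on ℝ^m. Suppose the linear map sending a symmetric trace-free 2-index array P to the array (W*P)_{i₂…i_{m−2} j} = Σ_{l,k} W*_{l i₂…i_{m−2} k j} P_{lk} (where W*_{i₁…i_{m−2} j k} = Σ_{p,q} ε_{i₁…i_{m−2} p q} W_{pqjk}) is injective. Then every symmetric 2-index array Q that is Weyl compatible with W is a multiple of the metric: Q_{ij} = ((Σ_l Q_{ll})/m)·δ_{ij} for all i, j. -/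
lemma levi_comp_swap (m : ℕ) (f : Fin m → Fin m) (a b : Fin m) (hab : a ≠ b) :
    leviCivita m (f ∘ ⇑(Equiv.swap a b)) = - leviCivita m f := by
  by_cases h : Function.Bijective f
  · have h2 : Function.Bijective (f ∘ ⇑(Equiv.swap a b)) :=
      h.comp (Equiv.swap a b).bijective
    have he : Equiv.ofBijective _ h2 = Equiv.ofBijective f h * Equiv.swap a b := by
      ext x; rfl
    rw [leviCivita, leviCivita, dif_pos h2, dif_pos h, he, map_mul,
      Equiv.Perm.sign_swap hab]
    push_cast
    ring
  · have h2 : ¬ Function.Bijective (f ∘ ⇑(Equiv.swap a b)) := by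
      intro hc
      have hfe : (f ∘ ⇑(Equiv.swap a b)) ∘ ⇑(Equiv.swap a b) = f := by
        funext x; simp
      exact h (hfe ▸ hc.comp (Equiv.swap a b).bijective)
    rw [leviCivita, leviCivita, dif_neg h2, dif_neg h, neg_zero]

lemma sum3_rot {m : ℕ} (A : Fin m → Fin m → Fin m → ℝ) :
    ∑ a, ∑ b, ∑ c, A a b c = ∑ a, ∑ b, ∑ c, A c a b := by
  rw [Finset.sum_comm]
  exact Finset.sum_congr rfl fun b _ => Finset.sum_comm

lemma TC0 (m : ℕ) (hm : 4 ≤ m) (J : Fin (m - 3) → Fin m) (l p q : Fin m) :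
    extendTuple m (consTuple m l J) p q ⟨0, by omega⟩ = l := by
  rw [extendTuple, dif_pos (show ((⟨0, by omega⟩ : Fin m) : ℕ) < m - 2 by simp; omega),
    consTuple, dif_pos rfl]

lemma TC1 (m : ℕ) (hm : 4 ≤ m) (J : Fin (m - 3) → Fin m) (l p q : Fin m) :
    extendTuple m (consTuple m l J) p q ⟨m - 2, by omega⟩ = p := by
  rw [extendTuple, dif_neg (show ¬ ((⟨m - 2, by omega⟩ : Fin m) : ℕ) < m - 2 by simp),
    if_pos rfl]

lemma TC2 (m : ℕ) (hm : 4 ≤ m) (J : Fin (m - 3) → Fin m) (l p q : Fin m) :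
    extendTuple m (consTuple m l J) p q ⟨m - 1, by omega⟩ = q := by
  rw [extendTuple, dif_neg (show ¬ ((⟨m - 1, by omega⟩ : Fin m) : ℕ) < m - 2 by simp; omega),
    if_neg (show ¬ ((⟨m - 1, by omega⟩ : Fin m) : ℕ) = m - 2 by simp; omega)]

lemma TCother (m : ℕ) (hm : 4 ≤ m) (J : Fin (m - 3) → Fin m) (l p q l' p' q' : Fin m)
    (t : Fin m) (h0 : (t : ℕ) ≠ 0) (h1 : (t : ℕ) ≠ m - 2) (h2 : (t : ℕ) ≠ m - 1) :
    extendTuple m (consTuple m l J) p q t = extendTuple m (consTuple m l' J) p' q' t := by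
  have ht : (t : ℕ) < m - 2 := by have := t.isLt; omega
  rw [extendTuple, extendTuple, dif_pos ht, dif_pos ht, consTuple, consTuple,
    dif_neg (show ¬ ((⟨(t:ℕ), ht⟩ : Fin (m-2)) : ℕ) = 0 from h0),
    dif_neg (show ¬ ((⟨(t:ℕ), ht⟩ : Fin (m-2)) : ℕ) = 0 from h0)]

noncomputable def Fc (m : ℕ) (J : Fin (m - 3) → Fin m) (l p q : Fin m) : ℝ :=
  leviCivita m (extendTuple m (consTuple m l J) p q)

lemma Fc_swap12 (m : ℕ) (hm : 4 ≤ m) (J : Fin (m - 3) → Fin m) (l p q : Fin m) :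
    Fc m J l q p = - Fc m J l p q := by
  have h12 : (⟨m - 2, by omega⟩ : Fin m) ≠ ⟨m - 1, by omega⟩ := by
    simp [Fin.ext_iff]; omega
  have key : extendTuple m (consTuple m l J) q p =
      extendTuple m (consTuple m l J) p q ∘
        ⇑(Equiv.swap (⟨m - 2, by omega⟩ : Fin m) ⟨m - 1, by omega⟩) := by
    funext t
    rcases eq_or_ne t ⟨m - 2, by omega⟩ with rfl | ha
    · simp only [Function.comp_apply, Equiv.swap_apply_left]
      rw [TC1 m hm, TC2 m hm]
    rcases eq_or_ne t ⟨m - 1, by omega⟩ with rfl | hb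
    · simp only [Function.comp_apply, Equiv.swap_apply_right]
      rw [TC2 m hm, TC1 m hm]
    · simp only [Function.comp_apply, Equiv.swap_apply_of_ne_of_ne ha hb]
      rcases eq_or_ne t ⟨0, by omega⟩ with rfl | hc
      · rw [TC0 m hm, TC0 m hm]
      · exact TCother m hm J l q p l p q t (fun h => hc (Fin.ext h))
          (fun h => ha (Fin.ext h)) (fun h => hb (Fin.ext h))
  rw [Fc, Fc, key, levi_comp_swap _ _ _ _ h12]

lemma Fc_swap01 (m : ℕ) (hm : 4 ≤ m) (J : Fin (m - 3) → Fin m) (l p q : Fin m) :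
    Fc m J p l q = - Fc m J l p q := by
  have h01 : (⟨0, by omega⟩ : Fin m) ≠ ⟨m - 2, by omega⟩ := by
    simp [Fin.ext_iff]; omega
  have key : extendTuple m (consTuple m p J) l q =
      extendTuple m (consTuple m l J) p q ∘
        ⇑(Equiv.swap (⟨0, by omega⟩ : Fin m) ⟨m - 2, by omega⟩) := by
    funext t
    rcases eq_or_ne t ⟨0, by omega⟩ with rfl | ha
    · simp only [Function.comp_apply, Equiv.swap_apply_left]
      rw [TC0 m hm, TC1 m hm]
    rcases eq_or_ne t ⟨m - 2, by omega⟩ with rfl | hb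
    · simp only [Function.comp_apply, Equiv.swap_apply_right]
      rw [TC1 m hm, TC0 m hm]
    · simp only [Function.comp_apply, Equiv.swap_apply_of_ne_of_ne ha hb]
      rcases eq_or_ne t ⟨m - 1, by omega⟩ with rfl | hc
      · rw [TC2 m hm, TC2 m hm]
      · exact TCother m hm J p l q l p q t (fun h => ha (Fin.ext h))
          (fun h => hb (Fin.ext h)) (fun h => hc (Fin.ext h))
  rw [Fc, Fc, key, levi_comp_swap _ _ _ _ h01]

lemma Fc_cyc (m : ℕ) (hm : 4 ≤ m) (J : Fin (m - 3) → Fin m) (a b c : Fin m) :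
    Fc m J c a b = Fc m J a b c := by
  rw [Fc_swap01 m hm J a c b, Fc_swap12 m hm J a c b]  -- ?
/-- If the linear map `P ↦ W*P`, defined on symmetric trace-free 2-index arrays, is
injective, then every symmetric 2-index array `Q` that is Weyl compatible with `W` is a
multiple of the metric: `Q_{ij} = ((Σ_l Q_{ll})/m)·δ_{ij}`. -/
theorem weyl_compatible_is_multiple_of_metric_of_injective
    (m : ℕ) (hm : 4 ≤ m) (W : Fin m → Fin m → Fin m → Fin m → ℝ)
    (hW : IsWeylTensor m W)
    (hinj : ∀ P P' : Fin m → Fin m → ℝ,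
      (∀ i j, P i j = P j i) → (∑ i, P i i) = 0 →
      (∀ i j, P' i j = P' j i) → (∑ i, P' i i) = 0 →
      (∀ (J : Fin (m - 3) → Fin m) (j : Fin m),
        wstarAction m W P J j = wstarAction m W P' J j) → P = P')
    (Q : Fin m → Fin m → ℝ) (hQsymm : ∀ i j, Q i j = Q j i)
    (hQW : Compatible m W Q) :
    ∀ i j, Q i j = ((∑ l, Q l l) / (m : ℝ)) * kdelta m i j := by
  obtain ⟨hA1, hA2, hPair, hB, hTr⟩ := hW
  have hm0 : (m : ℝ) ≠ 0 := Nat.cast_ne_zero.mpr (by omega)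
  set c : ℝ := (∑ l, Q l l) / (m : ℝ) with hc
  set P : Fin m → Fin m → ℝ := fun i j => Q i j - c * kdelta m i j with hP
  -- symmetry of P
  have hPsymm : ∀ i j, P i j = P j i := by
    intro i j
    simp only [hP, kdelta, eq_comm (a := i) (b := j), hQsymm i j]
  -- trace of P
  have hPtr : (∑ i, P i i) = 0 := by
    simp only [hP, kdelta, if_pos rfl, mul_one, Finset.sum_sub_distrib,
      Finset.sum_const, Finset.card_univ, Fintype.card_fin, nsmul_eq_mul, hc]
    field_simp
    simp
  -- the Kronecker delta sum computes
  have hdel : ∀ i j k s : Fin m,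
      ∑ l, (W l i k s * kdelta m j l + W l i s j * kdelta m k l
        + W l i j k * kdelta m s l) = 0 := by
    intro i j k s
    have h1 : ∀ (a b d : Fin m) (e : Fin m),
        ∑ l, W l a b d * kdelta m e l = W e a b d := by
      intro a b d e
      rw [Finset.sum_eq_single e]
      · simp [kdelta]
      · intro x _ hx; simp [kdelta, (Ne.symm hx : ¬ e = x)]
      · intro h; exact absurd (Finset.mem_univ e) h
    rw [Finset.sum_add_distrib, Finset.sum_add_distrib, h1, h1, h1,
      hA1 i j k s, hA1 i k s j, hA1 i s j k]
    have := hB i j k s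
    linarith
  -- P is compatible with W
  have hPc : Compatible m W P := by
    intro i j k s
    have hsplit : ∀ l : Fin m,
        W l i k s * P j l + W l i s j * P k l + W l i j k * P s l
        = (W l i k s * Q j l + W l i s j * Q k l + W l i j k * Q s l)
          - c * (W l i k s * kdelta m j l + W l i s j * kdelta m k l
            + W l i j k * kdelta m s l) := by
      intro l; simp only [hP]; ring
    rw [Finset.sum_congr rfl fun l _ => hsplit l, Finset.sum_sub_distrib,
      hQW i j k s, ← Finset.mul_sum, hdel i j k s, mul_zero, sub_zero]
  -- key cyclic identity
  have hkey : ∀ (j a b d : Fin m),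
      (∑ k, W b d k j * P a k) + (∑ k, W d a k j * P b k)
        + (∑ k, W a b k j * P d k) = 0 := by
    intro j a b d
    have h := hPc j a b d
    calc (∑ k, W b d k j * P a k) + (∑ k, W d a k j * P b k)
          + (∑ k, W a b k j * P d k)
        = ∑ k, (W k j b d * P a k + W k j d a * P b k + W k j a b * P d k) := by
          rw [Finset.sum_add_distrib, Finset.sum_add_distrib]
          congr 1
          · congr 1
            · exact Finset.sum_congr rfl fun k _ => by rw [hPair b d k j]
            · exact Finset.sum_congr rfl fun k _ => by rw [hPair d a k j]
          · exact Finset.sum_congr rfl fun k _ => by rw [hPair a b k j]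
      _ = 0 := h
  -- rewrite wstarAction as a triple sum against Fc
  have hws : ∀ (R : Fin m → Fin m → ℝ) (J : Fin (m - 3) → Fin m) (j : Fin m),
      wstarAction m W R J j
        = ∑ a, ∑ b, ∑ d, Fc m J a b d * ∑ k, W b d k j * R a k := by
    intro R J j
    rw [wstarAction]
    refine Finset.sum_congr rfl fun a _ => ?_
    calc ∑ k, wstar m W (consTuple m a J) k j * R a k
        = ∑ k, ∑ b, ∑ d, Fc m J a b d * W b d k j * R a k := by
          refine Finset.sum_congr rfl fun k _ => ?_
          rw [wstar, Finset.sum_mul]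
          exact Finset.sum_congr rfl fun b _ => by rw [Finset.sum_mul]; rfl
      _ = ∑ b, ∑ k, ∑ d, Fc m J a b d * W b d k j * R a k := Finset.sum_comm
      _ = ∑ b, ∑ d, ∑ k, Fc m J a b d * W b d k j * R a k :=
          Finset.sum_congr rfl fun b _ => Finset.sum_comm
      _ = ∑ b, ∑ d, Fc m J a b d * ∑ k, W b d k j * R a k := by
          refine Finset.sum_congr rfl fun b _ => Finset.sum_congr rfl fun d _ => ?_
          rw [Finset.mul_sum]
          exact Finset.sum_congr rfl fun k _ => by ring
  -- the triple sum vanishes for P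
  have hS0 : ∀ (J : Fin (m - 3) → Fin m) (j : Fin m),
      wstarAction m W P J j = 0 := by
    intro J j
    rw [hws P J j]
    set Y : Fin m → Fin m → Fin m → ℝ := fun a b d => ∑ k, W b d k j * P a k with hY
    set S : ℝ := ∑ a, ∑ b, ∑ d, Fc m J a b d * Y a b d with hSdef
    have hb : (∑ a, ∑ b, ∑ d, Fc m J a b d * Y b d a) = S := by
      rw [sum3_rot (fun a b d => Fc m J a b d * Y b d a), hSdef]
      exact Finset.sum_congr rfl fun a _ => Finset.sum_congr rfl fun b _ =>
        Finset.sum_congr rfl fun d _ => by rw [Fc_cyc m hm J a b d]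
    have hd : (∑ a, ∑ b, ∑ d, Fc m J a b d * Y d a b) = S := by
      rw [sum3_rot (fun a b d => Fc m J a b d * Y d a b),
        sum3_rot (fun a b d => Fc m J d a b * Y b d a), hSdef]
      refine Finset.sum_congr rfl fun a _ => Finset.sum_congr rfl fun b _ =>
        Finset.sum_congr rfl fun d _ => ?_
      rw [Fc_cyc m hm J d a b, Fc_cyc m hm J a b d]
    have hzero : (∑ a, ∑ b, ∑ d, Fc m J a b d * Y a b d)
        + (∑ a, ∑ b, ∑ d, Fc m J a b d * Y b d a)
        + (∑ a, ∑ b, ∑ d, Fc m J a b d * Y d a b) = 0 := by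
      rw [← Finset.sum_add_distrib, ← Finset.sum_add_distrib]
      rw [show (0:ℝ) = ∑ a : Fin m, ∑ b : Fin m, ∑ d : Fin m, (0:ℝ) by simp]
      refine Finset.sum_congr rfl fun a _ => ?_
      rw [← Finset.sum_add_distrib, ← Finset.sum_add_distrib]
      refine Finset.sum_congr rfl fun b _ => ?_
      rw [← Finset.sum_add_distrib, ← Finset.sum_add_distrib]
      refine Finset.sum_congr rfl fun d _ => ?_
      have hkey' : Y a b d + Y b d a + Y d a b = 0 := hkey j a b d
      calc Fc m J a b d * Y a b d + Fc m J a b d * Y b d a + Fc m J a b d * Y d a b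
          = Fc m J a b d * (Y a b d + Y b d a + Y d a b) := by ring
        _ = 0 := by rw [hkey', mul_zero]
    linarith
  -- apply injectivity against the zero array
  have hP0 : P = fun _ _ => (0 : ℝ) := by
    refine hinj P (fun _ _ => 0) hPsymm hPtr (fun _ _ => rfl) (by simp) ?_
    intro J j
    rw [hS0 J j]
    simp [wstarAction, wstar]
  intro i j
  have := congrFun (congrFun hP0 i) j
  simp only [hP] at this
  linarith
end
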